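/- Define the area integrand F(A) := (1 + |A|² + Σ_{|α| ≥ 2} (det M_{αβ}(A))²)^{1/2} on n × m matrices A, where M_{αβ}(A) runs over all k × k minors with k ≥ 2. Then for |A| ≤ 1, |∂_{A_{ij}} F(A) − A_{ij}| ≤ C |A|³ for all entries (i,j), with C depending only on m and n. -/

import Mathlib

open MeasureTheory
open scoped ENNReal NNReal

noncomputable section

private lemma prod_le_pow_card_aux {ι : Type*} [Fintype ι] [DecidableEq ι] (f : ι → ℝ) (a : ℝ)
    (h0 : ∀ x, 0 ≤ f x) (h1 : ∀ x, f x ≤ 1) (t : Finset ι) (ht : ∀ x ∈ t, f x ≤ a) :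
    ∏ x, f x ≤ a ^ t.card := by
  rw [← Finset.prod_sdiff (Finset.subset_univ t)]
  have h2 : ∏ x ∈ Finset.univ \ t, f x ≤ 1 :=
    Finset.prod_le_one (fun x _ => h0 x) (fun x _ => h1 x)
  have h3 : ∏ x ∈ t, f x ≤ a ^ t.card := by
    rw [← Finset.prod_const]
    exact Finset.prod_le_prod (fun x _ => h0 x) ht
  calc (∏ x ∈ Finset.univ \ t, f x) * ∏ x ∈ t, f x
      ≤ 1 * a ^ t.card :=
        mul_le_mul h2 h3 (Finset.prod_nonneg fun x _ => h0 x) zero_le_one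
    _ = a ^ t.card := one_mul _

private lemma abs_det_le_aux {k : ℕ} (M : Matrix (Fin k) (Fin k) ℝ) (bd : ℝ)
    (h : ∀ σ : Equiv.Perm (Fin k), ∏ x, |M (σ x) x| ≤ bd) :
    |M.det| ≤ (k.factorial : ℝ) * bd := by
  rw [Matrix.det_apply]
  calc |∑ σ : Equiv.Perm (Fin k), Equiv.Perm.sign σ • ∏ x, M (σ x) x|
      ≤ ∑ σ : Equiv.Perm (Fin k), |Equiv.Perm.sign σ • ∏ x, M (σ x) x| :=
        Finset.abs_sum_le_sum_abs _ _
    _ ≤ ∑ _σ : Equiv.Perm (Fin k), bd := by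
        refine Finset.sum_le_sum fun σ _ => ?_
        have e : |Equiv.Perm.sign σ • ∏ x, M (σ x) x| = |∏ x, M (σ x) x| := by
          rcases Int.units_eq_one_or (Equiv.Perm.sign σ) with hs | hs <;>
            simp [hs, Units.smul_def]
        rw [e, Finset.abs_prod]
        exact h σ
    _ = (k.factorial : ℝ) * bd := by
        simp [Finset.sum_const, Fintype.card_perm, nsmul_eq_mul]

private lemma det_bound_sq {k : ℕ} (hk : 2 ≤ k) (B : Matrix (Fin k) (Fin k) ℝ) (a : ℝ)
    (ha1 : a ≤ 1) (hB : ∀ i j, |B i j| ≤ a) :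
    |B.det| ≤ (k.factorial : ℝ) * a ^ 2 := by
  apply abs_det_le_aux
  intro σ
  have h01 : (⟨0, by omega⟩ : Fin k) ≠ ⟨1, by omega⟩ := by simp [Fin.ext_iff]
  have := prod_le_pow_card_aux (fun x => |B (σ x) x|) a
    (fun x => abs_nonneg _) (fun x => (hB _ _).trans ha1)
    ({⟨0, by omega⟩, ⟨1, by omega⟩} : Finset (Fin k)) (fun x _ => hB _ _)
  rwa [Finset.card_insert_of_notMem (by simpa using h01), Finset.card_singleton] at this

private lemma det_bound_row {k : ℕ} (hk : 2 ≤ k) (B : Matrix (Fin k) (Fin k) ℝ)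
    (i0 j0 : Fin k) (a : ℝ) (ha1 : a ≤ 1) (hB : ∀ i j, |B i j| ≤ a) :
    |(B.updateRow i0 (Pi.single j0 1)).det| ≤ (k.factorial : ℝ) * a := by
  apply abs_det_le_aux
  intro σ
  set M := B.updateRow i0 (Pi.single j0 1) with hM
  have hent : ∀ x, |M (σ x) x| ≤ 1 := by
    intro x
    by_cases hx : σ x = i0
    · rw [hM, Matrix.updateRow_apply, if_pos hx]
      rcases eq_or_ne x j0 with h | h <;> simp [Pi.single_apply, h]
    · rw [hM, Matrix.updateRow_apply, if_neg hx]
      exact (hB _ _).trans ha1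
  have z0 : (0 : ℕ) < k := by omega
  have z1 : (1 : ℕ) < k := by omega
  set x0 : Fin k := if σ ⟨0, z0⟩ = i0 then ⟨1, z1⟩ else ⟨0, z0⟩ with hx0
  have hne : σ x0 ≠ i0 := by
    rw [hx0]
    split_ifs with h
    · intro hc
      have : (⟨0, z0⟩ : Fin k) = ⟨1, z1⟩ := σ.injective (h.trans hc.symm)
      simp [Fin.ext_iff] at this
    · exact h
  have := prod_le_pow_card_aux (fun x => |M (σ x) x|) a
    (fun x => abs_nonneg _) hent ({x0} : Finset (Fin k))
    (fun x hx => by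
      rw [Finset.mem_singleton] at hx
      subst hx
      show |M (σ x0) x0| ≤ a
      rw [hM, Matrix.updateRow_apply, if_neg hne]
      exact hB _ _)
  rwa [Finset.card_singleton, pow_one] at this

private lemma det_affine_aux {k : ℕ} (B : Matrix (Fin k) (Fin k) ℝ) (i0 j0 : Fin k) (t : ℝ) :
    (B + t • Matrix.single i0 j0 1).det
      = B.det + t * (B.updateRow i0 (Pi.single j0 1)).det := by
  have h : B + t • Matrix.single i0 j0 1
      = B.updateRow i0 (B i0 + t • (Pi.single j0 1 : Fin k → ℝ)) := by
    ext x y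
    by_cases hx : x = i0
    · subst hx
      simp [Matrix.single, Pi.single_apply, eq_comm]
    · simp [Matrix.updateRow_ne hx, Matrix.single, Ne.symm hx]
  rw [h, Matrix.det_updateRow_add, Matrix.updateRow_eq_self, Matrix.det_updateRow_smul]

/-- The area integrand `F(A) = (1 + |A|² + Σ_{|α|≥2} (det M_{αβ}(A))²)^{1/2}`, where the sum
runs over all `k × k` minors of `A` with `k ≥ 2`. -/
def areaIntegrand (n m : ℕ) (A : Matrix (Fin n) (Fin m) ℝ) : ℝ :=
  Real.sqrt (1 + (∑ i, ∑ j, (A i j) ^ 2) +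
    ∑ p : Finset (Fin n) × Finset (Fin m),
      (if h : p.1.card = p.2.card ∧ 2 ≤ p.1.card then
          Matrix.det (Matrix.of fun i j : Fin p.1.card =>
            A (p.1.orderIsoOfFin rfl i) (p.2.orderIsoOfFin h.1.symm j))
        else 0) ^ 2)

/-- The Hilbert–Schmidt (Frobenius) norm of a matrix. -/
def frob (n m : ℕ) (A : Matrix (Fin n) (Fin m) ℝ) : ℝ :=
  Real.sqrt (∑ i, ∑ j, (A i j) ^ 2)

set_option maxHeartbeats 2000000 in
/-- For `|A| ≤ 1` the entries of the gradient of the area integrand satisfy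
`|∂_{A_{ij}} F(A) − A_{ij}| ≤ C |A|³`, with `C = C(m,n)`. -/
theorem stmt17 (n m : ℕ) :
    ∃ C > (0 : ℝ),
      ∀ A : Matrix (Fin n) (Fin m) ℝ, frob n m A ≤ 1 →
        ∀ (i : Fin n) (j : Fin m),
          |deriv (fun t : ℝ => areaIntegrand n m (A + t • Matrix.single i j 1)) 0 -
              A i j| ≤ C * frob n m A ^ 3 := by
  classical
  set Pb : ℝ := (Fintype.card (Finset (Fin n) × Finset (Fin m)) : ℝ) with hPb
  set F : ℝ := (n.factorial : ℝ) with hF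
  have hPb0 : 0 ≤ Pb := by positivity
  have hF0 : 0 < F := by
    rw [hF]; exact_mod_cast Nat.factorial_pos n
  refine ⟨1 + 3 * Pb * (F * F), by positivity, ?_⟩
  intro A ha1 i j
  set E : Matrix (Fin n) (Fin m) ℝ := Matrix.single i j 1 with hE
  set a : ℝ := frob n m A with ha
  have ha0 : 0 ≤ a := Real.sqrt_nonneg _
  have hsum0 : (0:ℝ) ≤ ∑ i', ∑ j', A i' j' ^ 2 := by positivity
  have hQ0 : a ^ 2 = ∑ i', ∑ j', A i' j' ^ 2 := Real.sq_sqrt hsum0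
  have hentry : ∀ (i' : Fin n) (j' : Fin m), |A i' j'| ≤ a := by
    intro i' j'
    rw [ha, frob, ← Real.sqrt_sq_eq_abs]
    apply Real.sqrt_le_sqrt
    calc A i' j' ^ 2
        ≤ ∑ j'', A i' j'' ^ 2 :=
          Finset.single_le_sum (f := fun j'' => A i' j'' ^ 2)
            (fun _ _ => sq_nonneg _) (Finset.mem_univ j')
      _ ≤ ∑ i'', ∑ j'', A i'' j'' ^ 2 :=
          Finset.single_le_sum (f := fun i'' => ∑ j'', A i'' j'' ^ 2)
            (fun _ _ => by positivity) (Finset.mem_univ i')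
  -- bound on minors of A
  have hminor : ∀ (p : Finset (Fin n) × Finset (Fin m))
      (h : p.1.card = p.2.card ∧ 2 ≤ p.1.card),
      |Matrix.det (Matrix.of fun i' j' : Fin p.1.card =>
        A (p.1.orderIsoOfFin rfl i') (p.2.orderIsoOfFin h.1.symm j'))| ≤ F * a ^ 2 := by
    intro p h
    have hkn : p.1.card ≤ n := by
      have := Finset.card_le_univ p.1
      simpa using this
    calc |Matrix.det (Matrix.of fun i' j' : Fin p.1.card =>
            A (p.1.orderIsoOfFin rfl i') (p.2.orderIsoOfFin h.1.symm j'))|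
        ≤ ((p.1.card).factorial : ℝ) * a ^ 2 :=
          det_bound_sq h.2 _ a ha1 (fun x y => hentry _ _)
      _ ≤ F * a ^ 2 := by
          have : ((p.1.card).factorial : ℝ) ≤ F := by
            rw [hF]; exact_mod_cast Nat.factorial_le hkn
          have h2 : (0:ℝ) ≤ a ^ 2 := sq_nonneg a
          exact mul_le_mul_of_nonneg_right this h2
  -- derivative of each minor term
  have key : ∀ p : Finset (Fin n) × Finset (Fin m), ∃ D : ℝ,
      HasDerivAt (fun t : ℝ =>
        (if h : p.1.card = p.2.card ∧ 2 ≤ p.1.card then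
            Matrix.det (Matrix.of fun i' j' : Fin p.1.card =>
              (A + t • E) (p.1.orderIsoOfFin rfl i') (p.2.orderIsoOfFin h.1.symm j'))
          else 0) ^ 2) D 0
      ∧ |D| ≤ 2 * (F * F) * a ^ 3
      ∧ (if h : p.1.card = p.2.card ∧ 2 ≤ p.1.card then
            Matrix.det (Matrix.of fun i' j' : Fin p.1.card =>
              A (p.1.orderIsoOfFin rfl i') (p.2.orderIsoOfFin h.1.symm j'))
          else 0) ^ 2 ≤ (F * a ^ 2) ^ 2 := by
    intro p
    by_cases h : p.1.card = p.2.card ∧ 2 ≤ p.1.card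
    · have hval : (if h : p.1.card = p.2.card ∧ 2 ≤ p.1.card then
            Matrix.det (Matrix.of fun i' j' : Fin p.1.card =>
              A (p.1.orderIsoOfFin rfl i') (p.2.orderIsoOfFin h.1.symm j'))
          else 0) ^ 2 ≤ (F * a ^ 2) ^ 2 := by
        rw [dif_pos h]
        have hc := hminor p h
        calc (Matrix.det (Matrix.of fun i' j' : Fin p.1.card =>
                A (p.1.orderIsoOfFin rfl i') (p.2.orderIsoOfFin h.1.symm j'))) ^ 2
            = |Matrix.det (Matrix.of fun i' j' : Fin p.1.card =>
                A (p.1.orderIsoOfFin rfl i') (p.2.orderIsoOfFin h.1.symm j'))| ^ 2 :=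
              (sq_abs _).symm
          _ ≤ (F * a ^ 2) ^ 2 := by
              apply pow_le_pow_left₀ (abs_nonneg _) hc
      by_cases hij : i ∈ p.1 ∧ j ∈ p.2
      · -- the perturbed minor is affine in t
        set i0 : Fin p.1.card := (p.1.orderIsoOfFin rfl).symm ⟨i, hij.1⟩ with hi0
        set j0 : Fin p.1.card := (p.2.orderIsoOfFin h.1.symm).symm ⟨j, hij.2⟩ with hj0
        set B : Matrix (Fin p.1.card) (Fin p.1.card) ℝ :=
          Matrix.of fun i' j' => A (p.1.orderIsoOfFin rfl i') (p.2.orderIsoOfFin h.1.symm j')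
          with hBdef
        have hmat : ∀ t : ℝ, (Matrix.of fun i' j' : Fin p.1.card =>
            (A + t • E) (p.1.orderIsoOfFin rfl i') (p.2.orderIsoOfFin h.1.symm j'))
            = B + t • Matrix.single i0 j0 1 := by
          intro t
          ext x y
          simp only [Matrix.of_apply, Matrix.add_apply, Matrix.smul_apply, hE, hBdef,
            Matrix.single, smul_eq_mul, hi0, hj0]
          congr 1
          congr 1
          congr 1
          rw [eq_iff_iff]
          constructor
          · rintro ⟨h1, h2⟩
            constructor
            · rw [OrderIso.symm_apply_eq]; exact Subtype.ext h1
            · rw [OrderIso.symm_apply_eq]; exact Subtype.ext h2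
          · rintro ⟨h1, h2⟩
            rw [OrderIso.symm_apply_eq] at h1 h2
            exact ⟨congrArg Subtype.val h1.symm ▸ rfl, by rw [← h2]⟩
        set c : ℝ := B.det with hc
        set b : ℝ := (B.updateRow i0 (Pi.single j0 1)).det with hb
        have hfp : (fun t : ℝ =>
            (if h : p.1.card = p.2.card ∧ 2 ≤ p.1.card then
              Matrix.det (Matrix.of fun i' j' : Fin p.1.card =>
                (A + t • E) (p.1.orderIsoOfFin rfl i') (p.2.orderIsoOfFin h.1.symm j'))
            else 0) ^ 2) = fun t : ℝ => (c + t * b) ^ 2 := by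
          funext t
          rw [dif_pos h, hmat t, det_affine_aux]
        refine ⟨2 * c * b, ?_, ?_, hval⟩
        · rw [hfp]
          have base : HasDerivAt (fun t : ℝ => c + t * b) (1 * b) 0 :=
            ((hasDerivAt_id (0:ℝ)).mul_const b).const_add c
          have h2 := base.fun_pow 2
          simpa using h2
        · have hcb : |c| ≤ F * a ^ 2 := hminor p h
          have hbb : |b| ≤ F * a := by
            have hkn : p.1.card ≤ n := by
              have := Finset.card_le_univ p.1
              simpa using this
            calc |b| ≤ ((p.1.card).factorial : ℝ) * a :=
                  det_bound_row h.2 B i0 j0 a ha1 (fun x y => hentry _ _)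
              _ ≤ F * a := by
                  have hfac : ((p.1.card).factorial : ℝ) ≤ F := by
                    rw [hF]; exact_mod_cast Nat.factorial_le hkn
                  exact mul_le_mul_of_nonneg_right hfac ha0
          calc |2 * c * b| = 2 * (|c| * |b|) := by
                rw [abs_mul, abs_mul, abs_two]; ring
            _ ≤ 2 * ((F * a ^ 2) * (F * a)) := by
                have := mul_le_mul hcb hbb (abs_nonneg b) (by positivity)
                linarith
            _ = 2 * (F * F) * a ^ 3 := by ring
      · -- the perturbation does not touch this minor
        have hmat : ∀ t : ℝ, (Matrix.of fun i' j' : Fin p.1.card =>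
            (A + t • E) (p.1.orderIsoOfFin rfl i') (p.2.orderIsoOfFin h.1.symm j'))
            = Matrix.of fun i' j' =>
                A (p.1.orderIsoOfFin rfl i') (p.2.orderIsoOfFin h.1.symm j') := by
          intro t
          ext x y
          simp only [Matrix.of_apply, Matrix.add_apply, Matrix.smul_apply, hE,
            Matrix.single, smul_eq_mul]
          rw [if_neg, mul_zero, add_zero]
          rintro ⟨h1, h2⟩
          rcases not_and_or.mp hij with hni | hnj
          · exact hni (h1 ▸ (p.1.orderIsoOfFin rfl x).2)
          · exact hnj (h2 ▸ (p.2.orderIsoOfFin h.1.symm y).2)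
        have hfp : (fun t : ℝ =>
            (if h : p.1.card = p.2.card ∧ 2 ≤ p.1.card then
              Matrix.det (Matrix.of fun i' j' : Fin p.1.card =>
                (A + t • E) (p.1.orderIsoOfFin rfl i') (p.2.orderIsoOfFin h.1.symm j'))
            else 0) ^ 2) = fun _ : ℝ =>
              (Matrix.det (Matrix.of fun i' j' : Fin p.1.card =>
                A (p.1.orderIsoOfFin rfl i') (p.2.orderIsoOfFin h.1.symm j'))) ^ 2 := by
          funext t
          rw [dif_pos h, hmat t]
        refine ⟨0, ?_, by rw [abs_zero]; positivity, hval⟩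
        rw [hfp]
        exact hasDerivAt_const _ _
    · refine ⟨0, ?_, by rw [abs_zero]; positivity, ?_⟩
      · have hfp : (fun t : ℝ =>
            (if h : p.1.card = p.2.card ∧ 2 ≤ p.1.card then
              Matrix.det (Matrix.of fun i' j' : Fin p.1.card =>
                (A + t • E) (p.1.orderIsoOfFin rfl i') (p.2.orderIsoOfFin h.1.symm j'))
            else 0) ^ 2) = fun _ : ℝ => (0:ℝ) ^ 2 := by
          funext t
          rw [dif_neg h]
        rw [hfp]
        exact hasDerivAt_const _ _
      · rw [dif_neg h]
        norm_num
        positivity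
  choose D hD hDb hD0 using key
  -- derivative of the quadratic part
  have hQder : HasDerivAt (fun t : ℝ => ∑ i', ∑ j',
      ((A + t • E : Matrix (Fin n) (Fin m) ℝ) i' j') ^ 2) (2 * A i j) 0 := by
    have h2 : HasDerivAt (fun t : ℝ => ∑ i', ∑ j',
        ((A + t • E : Matrix (Fin n) (Fin m) ℝ) i' j') ^ 2)
        (∑ i', ∑ j', 2 * (A i' j' + 0 * E i' j') ^ 1 * (1 * E i' j')) 0 := by
      apply HasDerivAt.fun_sum
      intro i' _
      apply HasDerivAt.fun_sum
      intro j' _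
      have base : HasDerivAt (fun t : ℝ => A i' j' + t * E i' j') (1 * E i' j') 0 :=
        ((hasDerivAt_id (0:ℝ)).mul_const (E i' j')).const_add (A i' j')
      have h3 : HasDerivAt (fun t : ℝ => (A i' j' + t * E i' j') ^ 2)
          (2 * (A i' j' + 0 * E i' j') ^ 1 * (1 * E i' j')) 0 := by
        simpa using base.fun_pow 2
      exact h3.congr_of_eventuallyEq (Filter.Eventually.of_forall fun t => by simp)
    convert h2 using 1
    simp only [zero_mul, add_zero, pow_one, one_mul]
    rw [hE]
    simp [Matrix.single, mul_ite, ite_and, Finset.sum_ite_eq]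
  -- assemble the function under the square root
  set G : ℝ → ℝ := fun t => 1 + (∑ i', ∑ j',
      ((A + t • E : Matrix (Fin n) (Fin m) ℝ) i' j') ^ 2) +
    ∑ p : Finset (Fin n) × Finset (Fin m),
      (if h : p.1.card = p.2.card ∧ 2 ≤ p.1.card then
          Matrix.det (Matrix.of fun i' j' : Fin p.1.card =>
            (A + t • E) (p.1.orderIsoOfFin rfl i') (p.2.orderIsoOfFin h.1.symm j'))
        else 0) ^ 2 with hGdef
  have hfun : (fun t : ℝ => areaIntegrand n m (A + t • E)) = fun t => Real.sqrt (G t) := rfl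
  have hG : HasDerivAt G (2 * A i j + ∑ p, D p) 0 := by
    rw [hGdef]
    exact (hQder.const_add 1).add (HasDerivAt.fun_sum fun p _ => hD p)
  set R0 : ℝ := ∑ p : Finset (Fin n) × Finset (Fin m),
      (if h : p.1.card = p.2.card ∧ 2 ≤ p.1.card then
          Matrix.det (Matrix.of fun i' j' : Fin p.1.card =>
            A (p.1.orderIsoOfFin rfl i') (p.2.orderIsoOfFin h.1.symm j'))
        else 0) ^ 2 with hR0def
  have hA00 : A + (0:ℝ) • E = A := by simp
  have hG0 : G 0 = 1 + a ^ 2 + R0 := by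
    rw [hGdef]
    simp only [hA00]
    rw [← hQ0, hR0def]
  have hR0nn : 0 ≤ R0 := by
    rw [hR0def]
    exact Finset.sum_nonneg fun p _ => sq_nonneg _
  have hR0b : R0 ≤ Pb * (F * a ^ 2) ^ 2 := by
    rw [hR0def]
    calc (∑ p : Finset (Fin n) × Finset (Fin m),
        (if h : p.1.card = p.2.card ∧ 2 ≤ p.1.card then
            Matrix.det (Matrix.of fun i' j' : Fin p.1.card =>
              A (p.1.orderIsoOfFin rfl i') (p.2.orderIsoOfFin h.1.symm j'))
          else 0) ^ 2)
        ≤ ∑ _p : Finset (Fin n) × Finset (Fin m), (F * a ^ 2) ^ 2 :=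
          Finset.sum_le_sum fun p _ => hD0 p
      _ = Pb * (F * a ^ 2) ^ 2 := by
          rw [Finset.sum_const, nsmul_eq_mul, hPb, Finset.card_univ]
  have hGpos : 0 < G 0 := by
    rw [hG0]
    nlinarith [sq_nonneg a]
  have hFder : HasDerivAt (fun t : ℝ => areaIntegrand n m (A + t • E))
      (1 / (2 * Real.sqrt (G 0)) * (2 * A i j + ∑ p, D p)) 0 := by
    rw [hfun]
    have := (Real.hasDerivAt_sqrt (ne_of_gt hGpos)).comp 0 hG
    exact this
  rw [hFder.deriv]
  -- final estimates
  set s : ℝ := Real.sqrt (G 0) with hs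
  set r : ℝ := ∑ p, D p with hr
  have hs1 : 1 ≤ s := by
    rw [hs, Real.one_le_sqrt]
    nlinarith [sq_nonneg a]
  have hs0 : 0 < s := lt_of_lt_of_le one_pos hs1
  have hsle : s ≤ G 0 := by
    have h1 : s * s = G 0 := Real.mul_self_sqrt hGpos.le
    nlinarith
  have hrb : |r| ≤ Pb * (2 * (F * F) * a ^ 3) := by
    rw [hr]
    calc |∑ p, D p| ≤ ∑ p, |D p| := Finset.abs_sum_le_sum_abs _ _
      _ ≤ ∑ _p : Finset (Fin n) × Finset (Fin m), 2 * (F * F) * a ^ 3 :=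
          Finset.sum_le_sum fun p _ => hDb p
      _ = Pb * (2 * (F * F) * a ^ 3) := by
          rw [Finset.sum_const, nsmul_eq_mul, hPb, Finset.card_univ]
  have hs2 : s - 1 ≤ a ^ 2 + R0 := by
    rw [hG0] at hsle
    linarith only [hsle]
  have hxa : |A i j| ≤ a := hentry i j
  clear_value s r
  clear hD hDb hD0 hG0 hsle hGpos hG hFder hfun hQder hminor hentry
  clear hr
  clear D
  clear_value R0
  clear hGdef hs hR0def
  clear G
  clear hA00 hQ0 hsum0 ha hE hPb hF
  clear_value a Pb F E
  clear E
  have hrw : 1 / (2 * s) * (2 * A i j + r) - A i j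
      = A i j * (1 / s - 1) + r * (1 / (2 * s)) := by
    field_simp
    ring
  have t1 : |A i j * (1 / s - 1)| ≤ a * (s - 1) := by
    rw [abs_mul]
    have h1 : |1 / s - 1| = 1 - 1 / s := by
      rw [abs_of_nonpos]
      · ring
      · have : 1 / s ≤ 1 := by
          rw [div_le_one hs0]; exact hs1
        linarith
    have h2 : 1 - 1 / s ≤ s - 1 := by
      have e : 1 - 1 / s = (s - 1) / s := by field_simp
      rw [e]
      exact div_le_self (by linarith) hs1
    rw [h1]
    exact mul_le_mul hxa h2 (by
      have : 1 / s ≤ 1 := by rw [div_le_one hs0]; exact hs1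
      linarith) ha0
  have t2 : |r * (1 / (2 * s))| ≤ |r| * (1 / 2) := by
    rw [abs_mul]
    apply mul_le_mul_of_nonneg_left _ (abs_nonneg r)
    rw [abs_of_nonneg (by positivity : (0:ℝ) ≤ 1 / (2 * s))]
    rw [div_le_div_iff₀ (by positivity) (by norm_num)]
    linarith
  have ha53 : a ^ 5 ≤ a ^ 3 := pow_le_pow_of_le_one ha0 ha1 (by norm_num)
  have e1 : a * (s - 1) ≤ a ^ 3 + Pb * (F * F) * a ^ 3 := by
    have h2 : a * (s - 1) ≤ a * (a ^ 2 + R0) :=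
      mul_le_mul_of_nonneg_left hs2 ha0
    have h4 : a * (a ^ 2 + R0) ≤ a * (a ^ 2 + Pb * (F * a ^ 2) ^ 2) :=
      mul_le_mul_of_nonneg_left (by linarith only [hR0b]) ha0
    have h5 : a * (a ^ 2 + Pb * (F * a ^ 2) ^ 2) = a ^ 3 + Pb * (F * F) * a ^ 5 := by ring
    have h6 : Pb * (F * F) * a ^ 5 ≤ Pb * (F * F) * a ^ 3 :=
      mul_le_mul_of_nonneg_left ha53 (mul_nonneg hPb0 (mul_nonneg hF0.le hF0.le))
    linarith only [h2, h4, h5, h6]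
  have e2 : |r| * (1 / 2) ≤ Pb * (F * F) * a ^ 3 := by
    linarith only [hrb]
  have hPF3 : 0 ≤ Pb * (F * F) * a ^ 3 :=
    mul_nonneg (mul_nonneg hPb0 (mul_nonneg hF0.le hF0.le)) (pow_nonneg ha0 3)
  calc |1 / (2 * s) * (2 * A i j + r) - A i j|
      = |A i j * (1 / s - 1) + r * (1 / (2 * s))| := by rw [hrw]
    _ ≤ |A i j * (1 / s - 1)| + |r * (1 / (2 * s))| := abs_add_le _ _
    _ ≤ a * (s - 1) + |r| * (1 / 2) := add_le_add t1 t2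
    _ ≤ (a ^ 3 + Pb * (F * F) * a ^ 3) + Pb * (F * F) * a ^ 3 := add_le_add e1 e2
    _ ≤ (1 + 3 * Pb * (F * F)) * a ^ 3 := by nlinarith [hPF3, pow_nonneg ha0 3]
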